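/- Let H be a Hilbert space, ϱ > 0, and F, G : H_{ϱ,0}(ℝ; H) → H_{ϱ,0}(ℝ; H) Lipschitz with (|F|_Lip + |G|_Lip)/2 < ϱ. Let u, v ∈ H_{ϱ,0}(ℝ; H) satisfy u = I F(u) and v = I G(v), where I is integration from -∞. Then |u - v|_{ϱ,0} ≤ (ϱ - (|F|_Lip + |G|_Lip)/2)^{-1} sup_{x} |F(x) - G(x)|_{ϱ,0}. -/

import Mathlib

open MeasureTheory Real Set

/-- Squared weighted norm integrand total: `∫ ‖f t‖² e^{-2ϱt} dt`. -/
noncomputable def wInt (ϱ : ℝ) {H : Type*} [NormedAddCommGroup H] (f : ℝ → H) : ℝ :=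
  ∫ t : ℝ, ‖f t‖ ^ 2 * Real.exp (-2 * ϱ * t)

/-- Membership in the weighted space `H_{ϱ,0}(ℝ; H)`. -/
def memW (ϱ : ℝ) {H : Type*} [NormedAddCommGroup H] (f : ℝ → H) : Prop :=
  AEStronglyMeasurable f volume ∧
    Integrable (fun t : ℝ => ‖f t‖ ^ 2 * Real.exp (-2 * ϱ * t))

/-- The weighted norm `|f|_{ϱ,0}`. -/
noncomputable def wNorm (ϱ : ℝ) {H : Type*} [NormedAddCommGroup H] (f : ℝ → H) : ℝ :=
  Real.sqrt (wInt ϱ f)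

/-! ### Auxiliary lemmas -/

lemma lint_exp_Ioi {b : ℝ} (hb : 0 < b) (s : ℝ) :
    ∫⁻ t in Ioi s, ENNReal.ofReal (Real.exp (b * (s - t))) = ENNReal.ofReal b⁻¹ := by
  have hfun : ∀ t : ℝ, Real.exp (b * (s - t)) = Real.exp (b * s) * Real.exp (-(b * t)) := by
    intro t; rw [← Real.exp_add]; ring_nf
  have hint : IntegrableOn (fun t => Real.exp (b * (s - t))) (Ioi s) := by
    have h := (exp_neg_integrableOn_Ioi s hb).const_mul (Real.exp (b * s))
    refine h.congr ?_
    filter_upwards with t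
    rw [hfun t]; ring_nf
  rw [← ofReal_integral_eq_lintegral_ofReal hint (ae_of_all _ fun t => (Real.exp_pos _).le)]
  congr 1
  have h2 : ∫ t in Ioi s, Real.exp (-(b * t)) = b⁻¹ * Real.exp (-(b * s)) := by
    have h3 := integral_comp_mul_left_Ioi (fun x => Real.exp (-x)) s hb
    simp only [smul_eq_mul] at h3
    rw [h3, integral_exp_neg_Ioi]
  calc ∫ t in Ioi s, Real.exp (b * (s - t))
      = ∫ t in Ioi s, Real.exp (b * s) * Real.exp (-(b * t)) := by
        exact setIntegral_congr_fun measurableSet_Ioi fun t _ => hfun t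
    _ = Real.exp (b * s) * ∫ t in Ioi s, Real.exp (-(b * t)) := by
        rw [integral_const_mul]
    _ = b⁻¹ := by rw [h2, mul_comm b⁻¹, ← mul_assoc, ← Real.exp_add]; ring_nf; simp

lemma lint_exp_Iio {b : ℝ} (hb : 0 < b) (c : ℝ) :
    ∫⁻ s in Iio c, ENNReal.ofReal (Real.exp (b * (s - c))) = ENNReal.ofReal b⁻¹ := by
  have h := (Measure.measurePreserving_neg (volume : Measure ℝ)).setLIntegral_comp_preimage_emb
    (Homeomorph.neg ℝ).measurableEmbedding
    (fun s => ENNReal.ofReal (Real.exp (b * (s - c)))) (Iio c)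
  rw [← h]
  have hpre : (fun x : ℝ => -x) ⁻¹' (Iio c) = Ioi (-c) := by
    ext x; simp [neg_lt]
  rw [show (Neg.neg ⁻¹' (Iio c) : Set ℝ) = Ioi (-c) from hpre]
  rw [← lint_exp_Ioi hb (-c)]
  apply setLIntegral_congr_fun measurableSet_Ioi
  exact fun x _ => by ring_nf

lemma ofReal_exp_sq (x : ℝ) :
    ENNReal.ofReal (Real.exp x) ^ (2 : ℝ) = ENNReal.ofReal (Real.exp (2 * x)) := by
  rw [ENNReal.ofReal_rpow_of_nonneg (Real.exp_pos x).le (by norm_num : (0:ℝ) ≤ 2)]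
  congr 1
  rw [show ((2:ℝ)) = ((2:ℕ):ℝ) by norm_num, Real.rpow_natCast]
  rw [pow_two, ← Real.exp_add]; ring_nf

lemma coe_nnnorm_exp (x : ℝ) :
    (‖Real.exp x‖₊ : ENNReal) = ENNReal.ofReal (Real.exp x) := by
  rw [← enorm_eq_nnnorm, ← ofReal_norm, Real.norm_eq_abs, abs_of_pos (Real.exp_pos _)]

lemma nnnorm_sq_weight {H : Type*} [NormedAddCommGroup H] (ϱ t : ℝ) (x : H) :
    ((‖x‖₊ : ENNReal)) ^ (2 : ℝ) * ENNReal.ofReal (Real.exp (-(2 * ϱ * t)))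
      = ENNReal.ofReal (‖x‖ ^ 2 * Real.exp (-2 * ϱ * t)) := by
  rw [← enorm_eq_nnnorm, ← ofReal_norm,
    ENNReal.ofReal_rpow_of_nonneg (norm_nonneg _) (by norm_num : (0:ℝ) ≤ 2),
    ← ENNReal.ofReal_mul (by positivity)]
  congr 1
  rw [show ((2:ℝ)) = ((2:ℕ):ℝ) by norm_num, Real.rpow_natCast]
  ring_nf

lemma smul_weight_nnnorm {H : Type*} [NormedAddCommGroup H] [NormedSpace ℝ H]
    (ϱ t : ℝ) (x : H) :
    ((‖Real.exp (-(ϱ * t)) • x‖₊ : ENNReal)) ^ (2 : ℝ)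
      = ((‖x‖₊ : ENNReal)) ^ (2 : ℝ) * ENNReal.ofReal (Real.exp (-(2 * ϱ * t))) := by
  rw [nnnorm_smul]
  push_cast
  rw [ENNReal.mul_rpow_of_nonneg _ _ (by norm_num : (0:ℝ) ≤ 2), mul_comm]
  congr 1
  rw [coe_nnnorm_exp, ofReal_exp_sq]
  ring_nf

/-- The lintegral version of the squared weighted norm. -/
noncomputable def wL (ϱ : ℝ) {H : Type*} [NormedAddCommGroup H] (f : ℝ → H) : ENNReal :=
  ∫⁻ t : ℝ, ((‖f t‖₊ : ENNReal)) ^ (2 : ℝ) * ENNReal.ofReal (Real.exp (-(2 * ϱ * t)))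

lemma wM_eq {H : Type*} [NormedAddCommGroup H] [NormedSpace ℝ H] (ϱ : ℝ) (f : ℝ → H) :
    eLpNorm (fun t => Real.exp (-(ϱ * t)) • f t) 2 volume = (wL ϱ f) ^ (1/2 : ℝ) := by
  rw [eLpNorm_eq_lintegral_rpow_enorm_toReal (by norm_num) (by norm_num)]
  rw [ENNReal.toReal_ofNat]
  congr 1
  exact lintegral_congr fun t => smul_weight_nnnorm ϱ t (f t)

section Conv
variable {H : Type*} [NormedAddCommGroup H] {ϱ : ℝ} {f g h : ℝ → H}

lemma integrand_aesm (hf : AEStronglyMeasurable f volume) :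
    AEStronglyMeasurable (fun t : ℝ => ‖f t‖ ^ 2 * Real.exp (-2 * ϱ * t)) volume := by
  apply AEStronglyMeasurable.mul
  · exact (hf.norm.aemeasurable.pow_const 2).aestronglyMeasurable
  · exact (Real.continuous_exp.comp (by fun_prop)).aestronglyMeasurable

lemma wL_eq_ofReal (hint : Integrable (fun t : ℝ => ‖f t‖ ^ 2 * Real.exp (-2 * ϱ * t))) :
    wL ϱ f = ENNReal.ofReal (wInt ϱ f) := by
  calc wL ϱ f = ∫⁻ t : ℝ, ENNReal.ofReal (‖f t‖ ^ 2 * Real.exp (-2 * ϱ * t)) :=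
        lintegral_congr fun t => nnnorm_sq_weight ϱ t (f t)
    _ = ENNReal.ofReal (wInt ϱ f) :=
        (ofReal_integral_eq_lintegral_ofReal hint
          (ae_of_all _ fun t => mul_nonneg (by positivity) (Real.exp_pos _).le)).symm

lemma wNorm_eq_toReal (hf : AEStronglyMeasurable f volume) :
    wNorm ϱ f = ((wL ϱ f) ^ (1/2 : ℝ)).toReal := by
  by_cases hint : Integrable (fun t : ℝ => ‖f t‖ ^ 2 * Real.exp (-2 * ϱ * t))
  · have hnn : (0:ℝ) ≤ wInt ϱ f :=
      integral_nonneg fun t => mul_nonneg (by positivity) (Real.exp_pos _).le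
    rw [wL_eq_ofReal hint, ← ENNReal.toReal_rpow, ENNReal.toReal_ofReal hnn,
      wNorm, Real.sqrt_eq_rpow]
  · have h1 : wL ϱ f = ⊤ := by
      have h2 := (lintegral_ofReal_ne_top_iff_integrable
        (μ := volume) (f := fun t : ℝ => ‖f t‖ ^ 2 * Real.exp (-2 * ϱ * t))
        (integrand_aesm hf) (ae_of_all _ fun t => by positivity)).not.mpr hint
      rw [not_not] at h2
      rw [← h2]
      exact lintegral_congr fun t => nnnorm_sq_weight ϱ t (f t)
    rw [h1, wNorm, wInt, integral_undef hint, ENNReal.top_rpow_of_pos (by norm_num)]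
    simp

lemma wL_ne_top (hf : memW ϱ f) : wL ϱ f ≠ ⊤ := by
  rw [wL_eq_ofReal hf.2]; exact ENNReal.ofReal_ne_top

lemma memW_sub (hf : memW ϱ f) (hg : memW ϱ g) : memW ϱ (fun t => f t - g t) := by
  refine ⟨hf.1.sub hg.1, ?_⟩
  have hb : Integrable (fun t : ℝ =>
      2 * (‖f t‖ ^ 2 * Real.exp (-2 * ϱ * t) + ‖g t‖ ^ 2 * Real.exp (-2 * ϱ * t))) :=
    (hf.2.add hg.2).const_mul 2
  refine hb.mono' (integrand_aesm (hf.1.sub hg.1)) (ae_of_all _ fun t => ?_)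
  have h1 : ‖f t - g t‖ ≤ ‖f t‖ + ‖g t‖ := norm_sub_le _ _
  have h2 : (0:ℝ) < Real.exp (-2 * ϱ * t) := Real.exp_pos _
  rw [Real.norm_eq_abs, abs_of_nonneg (mul_nonneg (by positivity) h2.le)]
  show ‖f t - g t‖ ^ 2 * Real.exp (-2 * ϱ * t) ≤ _
  have h3 : ‖f t - g t‖ ^ 2 ≤ (‖f t‖ + ‖g t‖) ^ 2 := by
    nlinarith [norm_nonneg (f t - g t)]
  have h4 := mul_le_mul_of_nonneg_right h3 h2.le
  have h5 : (‖f t‖ + ‖g t‖) ^ 2 ≤ 2 * (‖f t‖ ^ 2 + ‖g t‖ ^ 2) := by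
    nlinarith [sq_nonneg (‖f t‖ - ‖g t‖)]
  have h6 := mul_le_mul_of_nonneg_right h5 h2.le
  calc ‖f t - g t‖ ^ 2 * Real.exp (-2 * ϱ * t)
      ≤ 2 * (‖f t‖ ^ 2 + ‖g t‖ ^ 2) * Real.exp (-2 * ϱ * t) := le_trans h4 h6
    _ = 2 * (‖f t‖ ^ 2 * Real.exp (-2 * ϱ * t) + ‖g t‖ ^ 2 * Real.exp (-2 * ϱ * t)) := by ring

end Conv

lemma wL_tri {H : Type*} [NormedAddCommGroup H] [NormedSpace ℝ H] {ϱ : ℝ} {f g h : ℝ → H}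
    (hf : AEStronglyMeasurable f volume) (hg : AEStronglyMeasurable g volume)
    (hh : AEStronglyMeasurable h volume) :
    (wL ϱ (fun t => f t - h t)) ^ (1/2:ℝ)
      ≤ (wL ϱ (fun t => f t - g t)) ^ (1/2:ℝ) + (wL ϱ (fun t => g t - h t)) ^ (1/2:ℝ) := by
  rw [← wM_eq, ← wM_eq, ← wM_eq]
  have heq : (fun t => Real.exp (-(ϱ * t)) • (fun t => f t - h t) t)
      = (fun t => Real.exp (-(ϱ * t)) • (fun t => f t - g t) t)
        + (fun t => Real.exp (-(ϱ * t)) • (fun t => g t - h t) t) := by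
    funext t
    simp only [Pi.add_apply, ← smul_add]
    congr 1
    abel
  rw [heq]
  have hexp : AEStronglyMeasurable (fun t : ℝ => Real.exp (-(ϱ * t))) volume :=
    (Real.continuous_exp.comp (by fun_prop)).aestronglyMeasurable
  exact eLpNorm_add_le (hexp.smul (hf.sub hg)) (hexp.smul (hg.sub hh)) one_le_two

lemma exp_mul_integrableOn_Iio {b : ℝ} (hb : 0 < b) (c : ℝ) :
    IntegrableOn (fun s : ℝ => Real.exp (b * s)) (Iio c) := by
  have h0 : IntegrableOn (fun x : ℝ => Real.exp (-b * x)) (Ioi (-c)) :=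
    exp_neg_integrableOn_Ioi _ hb
  have h1 := (MeasurePreserving.integrableOn_comp_preimage
    (Measure.measurePreserving_neg (volume : Measure ℝ))
    (Homeomorph.neg ℝ).measurableEmbedding).2 h0
  have hpre : (Neg.neg ⁻¹' (Ioi (-c)) : Set ℝ) = Iio c := by
    ext x; simp [neg_lt]
  rw [hpre] at h1
  apply h1.congr_fun ?_ measurableSet_Iio
  intro x _
  simp only [Function.comp_apply]
  rw [show -b * -x = b * x by ring]

lemma memW_integrableOn_Iio {H : Type*} [NormedAddCommGroup H] {ϱ : ℝ} (hϱ : 0 < ϱ)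
    {f : ℝ → H} (hf : memW ϱ f) (c : ℝ) : IntegrableOn f (Iio c) volume := by
  have hexp := exp_mul_integrableOn_Iio (by positivity : (0:ℝ) < 2 * ϱ) c
  have hb : IntegrableOn (fun s : ℝ =>
      2⁻¹ * (‖f s‖ ^ 2 * Real.exp (-2 * ϱ * s) + Real.exp (2 * ϱ * s))) (Iio c) := by
    exact ((hf.2.integrableOn).add hexp).const_mul (2⁻¹ : ℝ)
  refine Integrable.mono' hb (hf.1.restrict) (ae_of_all _ fun s => ?_)
  have e3 : Real.exp (-(ϱ * s)) * Real.exp (ϱ * s) = 1 := by rw [← Real.exp_add]; simp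
  have e1 : Real.exp (-2 * ϱ * s) = Real.exp (-(ϱ * s)) ^ 2 := by
    rw [sq, ← Real.exp_add]; ring_nf
  have e2 : Real.exp (2 * ϱ * s) = Real.exp (ϱ * s) ^ 2 := by
    rw [sq, ← Real.exp_add]; ring_nf
  have e4 : ‖f s‖ * (Real.exp (-(ϱ * s)) * Real.exp (ϱ * s)) = ‖f s‖ := by
    rw [e3, mul_one]
  nlinarith [sq_nonneg (‖f s‖ * Real.exp (-(ϱ * s)) - Real.exp (ϱ * s)), norm_nonneg (f s)]

lemma wL_int_le {H : Type*} [NormedAddCommGroup H] [NormedSpace ℝ H] {ϱ : ℝ} (hϱ : 0 < ϱ)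
    {w : ℝ → H} (hw : AEStronglyMeasurable w volume) :
    wL ϱ (fun t => ∫ s in Iio t, w s) ≤ ENNReal.ofReal ϱ⁻¹ ^ 2 * wL ϱ w := by
  -- measurable version of the ennnorm of w
  obtain ⟨n, hnmeas, hn⟩ :
      ∃ n : ℝ → ENNReal, Measurable n ∧ (fun s => (‖w s‖₊ : ENNReal)) =ᵐ[volume] n :=
    ⟨hw.enorm.mk _, hw.enorm.measurable_mk, hw.enorm.ae_eq_mk⟩
  set c : ENNReal := ENNReal.ofReal ϱ⁻¹ with hc
  have hcne : c ≠ ⊤ := ENNReal.ofReal_ne_top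
  -- Step A : pointwise bound
  have stepA : ∀ t : ℝ, ((‖∫ s in Iio t, w s‖₊ : ENNReal)) ^ (2:ℝ)
      ≤ c * ∫⁻ s in Iio t,
          ((‖w s‖₊ : ENNReal)) ^ (2:ℝ) * ENNReal.ofReal (Real.exp (-(ϱ * (s - t)))) := by
    intro t
    have h1 : ((‖∫ s in Iio t, w s‖₊ : ENNReal)) ≤ ∫⁻ s in Iio t, (‖w s‖₊ : ENNReal) :=
      enorm_integral_le_lintegral_enorm _
    have conj2 : Real.HolderConjugate 2 2 := Real.holderConjugate_iff.mpr ⟨one_lt_two, by norm_num⟩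
    have hmeas2 : AEMeasurable
        (fun s => (‖w s‖₊ : ENNReal) * ENNReal.ofReal (Real.exp (-(ϱ * (s - t) / 2))))
        (volume.restrict (Iio t)) :=
      (hw.enorm.restrict).mul
        ((by fun_prop : Measurable fun s : ℝ =>
          ENNReal.ofReal (Real.exp (-(ϱ * (s - t) / 2)))).aemeasurable)
    have h2 : (∫⁻ s in Iio t, (‖w s‖₊ : ENNReal))
        = ∫⁻ s in Iio t,
            ((fun s => ENNReal.ofReal (Real.exp (ϱ * (s - t) / 2))) *
             (fun s => (‖w s‖₊ : ENNReal) * ENNReal.ofReal (Real.exp (-(ϱ * (s - t) / 2))))) s := by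
      apply lintegral_congr; intro s
      simp only [Pi.mul_apply]
      rw [← mul_assoc, mul_comm (ENNReal.ofReal (Real.exp (ϱ * (s - t) / 2))), mul_assoc,
        ← ENNReal.ofReal_mul (Real.exp_pos _).le, ← Real.exp_add]
      norm_num
    have h3 := ENNReal.lintegral_mul_le_Lp_mul_Lq (volume.restrict (Iio t)) conj2
      ((by fun_prop : Measurable fun s : ℝ =>
        ENNReal.ofReal (Real.exp (ϱ * (s - t) / 2))).aemeasurable)
      hmeas2
    rw [← h2] at h3
    have e1 : ∫⁻ s in Iio t, ENNReal.ofReal (Real.exp (ϱ * (s - t) / 2)) ^ (2:ℝ)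
        = c := by
      have : ∀ s : ℝ, ENNReal.ofReal (Real.exp (ϱ * (s - t) / 2)) ^ (2:ℝ)
          = ENNReal.ofReal (Real.exp (ϱ * (s - t))) := by
        intro s; rw [ofReal_exp_sq]; ring_nf
      rw [lintegral_congr fun s => this s, lint_exp_Iio hϱ t]
    have e2 : ∀ s : ℝ, ((‖w s‖₊ : ENNReal) * ENNReal.ofReal (Real.exp (-(ϱ * (s - t) / 2)))) ^ (2:ℝ)
        = ((‖w s‖₊ : ENNReal)) ^ (2:ℝ) * ENNReal.ofReal (Real.exp (-(ϱ * (s - t)))) := by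
      intro s
      rw [ENNReal.mul_rpow_of_nonneg _ _ (by norm_num : (0:ℝ) ≤ 2), ofReal_exp_sq]
      ring_nf
    rw [e1, lintegral_congr fun s => e2 s] at h3
    have h4 := h1.trans h3
    have h5 := ENNReal.rpow_le_rpow h4 (by norm_num : (0:ℝ) ≤ 2)
    refine h5.trans (le_of_eq ?_)
    rw [ENNReal.mul_rpow_of_nonneg _ _ (by norm_num : (0:ℝ) ≤ 2),
      ← ENNReal.rpow_mul, ← ENNReal.rpow_mul]
    norm_num
  -- Step B : integrate in t, swap
  have weight_comb : ∀ t s : ℝ,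
      ENNReal.ofReal (Real.exp (-(ϱ * (s - t)))) * ENNReal.ofReal (Real.exp (-(2 * ϱ * t)))
      = ENNReal.ofReal (Real.exp (-(2 * ϱ * s))) * ENNReal.ofReal (Real.exp (ϱ * (s - t))) := by
    intro t s
    rw [← ENNReal.ofReal_mul (Real.exp_pos _).le, ← ENNReal.ofReal_mul (Real.exp_pos _).le,
      ← Real.exp_add, ← Real.exp_add]
    ring_nf
  calc wL ϱ (fun t => ∫ s in Iio t, w s)
      ≤ ∫⁻ t, (c * ∫⁻ s in Iio t,
          ((‖w s‖₊ : ENNReal)) ^ (2:ℝ) * ENNReal.ofReal (Real.exp (-(ϱ * (s - t)))))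
          * ENNReal.ofReal (Real.exp (-(2 * ϱ * t))) := by
        apply lintegral_mono; intro t
        exact mul_le_mul_left (stepA t) _
    _ = c * ∫⁻ t, ∫⁻ s in Iio t,
          ((‖w s‖₊ : ENNReal)) ^ (2:ℝ) * ENNReal.ofReal (Real.exp (-(2 * ϱ * s)))
            * ENNReal.ofReal (Real.exp (ϱ * (s - t))) := by
        rw [← lintegral_const_mul' _ _ hcne]
        apply lintegral_congr; intro t
        rw [mul_assoc]
        congr 1
        rw [← lintegral_mul_const' _ _ (ENNReal.ofReal_ne_top)]
        apply lintegral_congr; intro s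
        rw [mul_assoc, weight_comb t s, ← mul_assoc]
    _ = c * ∫⁻ t, ∫⁻ s in Iio t,
          (n s) ^ (2:ℝ) * ENNReal.ofReal (Real.exp (-(2 * ϱ * s)))
            * ENNReal.ofReal (Real.exp (ϱ * (s - t))) := by
        congr 1
        apply lintegral_congr; intro t
        apply lintegral_congr_ae
        filter_upwards [ae_restrict_of_ae hn] with s hs
        rw [hs]
    _ = c * ∫⁻ t, ∫⁻ s,
          (n s) ^ (2:ℝ) * ENNReal.ofReal (Real.exp (-(2 * ϱ * s)))
            * ENNReal.ofReal (Real.exp (ϱ * (s - t)))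
            * (Set.Ioi s).indicator (fun _ => (1:ENNReal)) t := by
        congr 1
        apply lintegral_congr; intro t
        have hpt : ∀ s : ℝ,
            (n s) ^ (2:ℝ) * ENNReal.ofReal (Real.exp (-(2 * ϱ * s)))
              * ENNReal.ofReal (Real.exp (ϱ * (s - t)))
              * (Set.Ioi s).indicator (fun _ => (1:ENNReal)) t
            = (Set.Iio t).indicator (fun s => (n s) ^ (2:ℝ)
                * ENNReal.ofReal (Real.exp (-(2 * ϱ * s)))
                * ENNReal.ofReal (Real.exp (ϱ * (s - t)))) s := by
          intro s
          by_cases hst : s < t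
          · simp [Set.indicator_apply, hst, mem_Iio, mem_Ioi]
          · simp [Set.indicator_apply, hst, mem_Iio, mem_Ioi]
        rw [lintegral_congr hpt, lintegral_indicator measurableSet_Iio]
    _ = c * ∫⁻ s, ∫⁻ t,
          (n s) ^ (2:ℝ) * ENNReal.ofReal (Real.exp (-(2 * ϱ * s)))
            * ENNReal.ofReal (Real.exp (ϱ * (s - t)))
            * (Set.Ioi s).indicator (fun _ => (1:ENNReal)) t := by
        congr 1
        apply lintegral_lintegral_swap
        apply Measurable.aemeasurable
        have hind : (fun p : ℝ × ℝ => (Set.Ioi p.2).indicator (fun _ => (1:ENNReal)) p.1)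
            = {p : ℝ × ℝ | p.2 < p.1}.indicator (fun _ => (1:ENNReal)) := by
          ext p
          by_cases hp : p.2 < p.1
          · simp [Set.indicator_apply, hp, mem_Ioi]
          · simp [Set.indicator_apply, hp, mem_Ioi]
        apply Measurable.mul
        · apply Measurable.mul
          · apply Measurable.mul
            · exact ((hnmeas.comp measurable_snd).pow_const _)
            · exact (ENNReal.measurable_ofReal.comp
                (Real.measurable_exp.comp (by fun_prop)))
          · exact (ENNReal.measurable_ofReal.comp
              (Real.measurable_exp.comp (by fun_prop)))
        · rw [show (fun p : ℝ × ℝ => (Set.Ioi p.2).indicator (fun _ => (1:ENNReal)) p.1)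
              = {p : ℝ × ℝ | p.2 < p.1}.indicator (fun _ => (1:ENNReal)) from hind]
          exact measurable_const.indicator (measurableSet_lt measurable_snd measurable_fst)
    _ = c * ∫⁻ s, (n s) ^ (2:ℝ) * ENNReal.ofReal (Real.exp (-(2 * ϱ * s))) * c := by
        congr 1
        apply lintegral_congr; intro s
        have hinner : ∫⁻ t, ENNReal.ofReal (Real.exp (ϱ * (s - t)))
            * (Set.Ioi s).indicator (fun _ => (1:ENNReal)) t = c := by
          have hpt : ∀ t : ℝ, ENNReal.ofReal (Real.exp (ϱ * (s - t)))
              * (Set.Ioi s).indicator (fun _ => (1:ENNReal)) t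
              = (Set.Ioi s).indicator (fun t => ENNReal.ofReal (Real.exp (ϱ * (s - t)))) t := by
            intro t
            by_cases hst : s < t
            · simp [Set.indicator_apply, hst, mem_Ioi]
            · simp [Set.indicator_apply, hst, mem_Ioi]
          rw [lintegral_congr hpt, lintegral_indicator measurableSet_Ioi, lint_exp_Ioi hϱ s]
        calc ∫⁻ t, (n s) ^ (2:ℝ) * ENNReal.ofReal (Real.exp (-(2 * ϱ * s)))
              * ENNReal.ofReal (Real.exp (ϱ * (s - t)))
              * (Set.Ioi s).indicator (fun _ => (1:ENNReal)) t
            = ∫⁻ t, ((n s) ^ (2:ℝ) * ENNReal.ofReal (Real.exp (-(2 * ϱ * s))))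
              * (ENNReal.ofReal (Real.exp (ϱ * (s - t)))
                 * (Set.Ioi s).indicator (fun _ => (1:ENNReal)) t) :=
              lintegral_congr fun t => by ring
          _ = ((n s) ^ (2:ℝ) * ENNReal.ofReal (Real.exp (-(2 * ϱ * s))))
              * ∫⁻ t, ENNReal.ofReal (Real.exp (ϱ * (s - t)))
                 * (Set.Ioi s).indicator (fun _ => (1:ENNReal)) t := by
              apply lintegral_const_mul
              apply Measurable.mul
              · exact ENNReal.measurable_ofReal.comp (Real.measurable_exp.comp (by fun_prop))
              · exact measurable_const.indicator measurableSet_Ioi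
          _ = (n s) ^ (2:ℝ) * ENNReal.ofReal (Real.exp (-(2 * ϱ * s))) * c := by rw [hinner]
    _ = ENNReal.ofReal ϱ⁻¹ ^ 2 * wL ϱ w := by
        rw [lintegral_mul_const' _ _ hcne]
        have : ∫⁻ s, (n s) ^ (2:ℝ) * ENNReal.ofReal (Real.exp (-(2 * ϱ * s))) = wL ϱ w := by
          apply lintegral_congr_ae
          filter_upwards [hn] with s hs
          rw [hs]
        rw [this, hc, sq]
        ring

theorem stmt10 {H : Type*} [NormedAddCommGroup H] [InnerProductSpace ℂ H] [CompleteSpace H]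
    (ϱ LF LG S : ℝ) (hϱ : 0 < ϱ) (hLF : 0 ≤ LF) (hLG : 0 ≤ LG)
    (hsum : (LF + LG) / 2 < ϱ)
    (F G : (ℝ → H) → (ℝ → H))
    (hFmap : ∀ x, memW ϱ x → memW ϱ (F x))
    (hGmap : ∀ x, memW ϱ x → memW ϱ (G x))
    (hFlip : ∀ x y, memW ϱ x → memW ϱ y →
      wNorm ϱ (fun t => F x t - F y t) ≤ LF * wNorm ϱ (fun t => x t - y t))
    (hGlip : ∀ x y, memW ϱ x → memW ϱ y →
      wNorm ϱ (fun t => G x t - G y t) ≤ LG * wNorm ϱ (fun t => x t - y t))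
    (hS : ∀ x, memW ϱ x → wNorm ϱ (fun t => F x t - G x t) ≤ S)
    (u v : ℝ → H) (hu : memW ϱ u) (hv : memW ϱ v)
    (hufix : ∀ᵐ t : ℝ ∂volume, u t = ∫ s in Set.Iio t, F u s)
    (hvfix : ∀ᵐ t : ℝ ∂volume, v t = ∫ s in Set.Iio t, G v s) :
    wNorm ϱ (fun t => u t - v t) ≤ (ϱ - (LF + LG) / 2)⁻¹ * S := by
  have hFu := hFmap u hu
  have hFv := hFmap v hv
  have hGu := hGmap u hu
  have hGv := hGmap v hv
  have hFuGv : memW ϱ (fun t => F u t - G v t) := memW_sub hFu hGv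
  have hFuFv : memW ϱ (fun t => F u t - F v t) := memW_sub hFu hFv
  have hFvGv : memW ϱ (fun t => F v t - G v t) := memW_sub hFv hGv
  have hFuGu : memW ϱ (fun t => F u t - G u t) := memW_sub hFu hGu
  have hGuGv : memW ϱ (fun t => G u t - G v t) := memW_sub hGu hGv
  set d := wNorm ϱ (fun t => u t - v t) with hd
  have hd0 : 0 ≤ d := Real.sqrt_nonneg _
  have hS0 : 0 ≤ S := le_trans (Real.sqrt_nonneg _) (hS u hu)
  -- step 1 : d ≤ ϱ⁻¹ * |F u - G v|
  have hwLuv : wL ϱ (fun t => u t - v t)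
      = wL ϱ (fun t => ∫ s in Iio t, (fun s => F u s - G v s) s) := by
    apply lintegral_congr_ae
    filter_upwards [hufix, hvfix] with t h1 h2
    have h3 : u t - v t = ∫ s in Iio t, (F u s - G v s) := by
      rw [h1, h2,
        integral_sub (memW_integrableOn_Iio hϱ hFu t) (memW_integrableOn_Iio hϱ hGv t)]
    simp only [h3]
  have hkey := wL_int_le hϱ (w := fun s => F u s - G v s) (hFu.1.sub hGv.1)
  have step1 : d ≤ ϱ⁻¹ * wNorm ϱ (fun t => F u t - G v t) := by
    rw [hd, wNorm_eq_toReal (f := fun t => u t - v t) (hu.1.sub hv.1),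
      wNorm_eq_toReal (f := fun t => F u t - G v t) (hFu.1.sub hGv.1), hwLuv]
    have h6 : (wL ϱ (fun t => ∫ s in Iio t, (fun s => F u s - G v s) s)) ^ (1/2:ℝ)
        ≤ ENNReal.ofReal ϱ⁻¹ * (wL ϱ (fun t => F u t - G v t)) ^ (1/2:ℝ) := by
      have h7 := ENNReal.rpow_le_rpow hkey (by norm_num : (0:ℝ) ≤ 1/2)
      refine h7.trans (le_of_eq ?_)
      rw [ENNReal.mul_rpow_of_nonneg _ _ (by norm_num : (0:ℝ) ≤ 1/2),
        ← ENNReal.rpow_natCast (ENNReal.ofReal ϱ⁻¹) 2, ← ENNReal.rpow_mul]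
      norm_num
    have hfin : (ENNReal.ofReal ϱ⁻¹ * (wL ϱ (fun t => F u t - G v t)) ^ (1/2:ℝ)) ≠ ⊤ :=
      ENNReal.mul_ne_top ENNReal.ofReal_ne_top
        (ENNReal.rpow_ne_top_of_nonneg (by norm_num) (wL_ne_top hFuGv))
    have h8 := ENNReal.toReal_mono hfin h6
    rwa [ENNReal.toReal_mul, ENNReal.toReal_ofReal (inv_nonneg.mpr hϱ.le)] at h8
  -- triangle inequalities
  have tri : ∀ (a b c : ℝ → H), memW ϱ a → memW ϱ b → memW ϱ c →
      memW ϱ (fun t => a t - b t) → memW ϱ (fun t => b t - c t) →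
      wNorm ϱ (fun t => a t - c t)
        ≤ wNorm ϱ (fun t => a t - b t) + wNorm ϱ (fun t => b t - c t) := by
    intro a b c ha hb hc hab hbc
    rw [wNorm_eq_toReal (f := fun t => a t - c t) (ha.1.sub hc.1),
      wNorm_eq_toReal (f := fun t => a t - b t) (ha.1.sub hb.1),
      wNorm_eq_toReal (f := fun t => b t - c t) (hb.1.sub hc.1)]
    have h7 := wL_tri (ϱ := ϱ) ha.1 hb.1 hc.1
    have f1 : (wL ϱ (fun t => a t - b t)) ^ (1/2:ℝ) ≠ ⊤ :=
      ENNReal.rpow_ne_top_of_nonneg (by norm_num) (wL_ne_top hab)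
    have f2 : (wL ϱ (fun t => b t - c t)) ^ (1/2:ℝ) ≠ ⊤ :=
      ENNReal.rpow_ne_top_of_nonneg (by norm_num) (wL_ne_top hbc)
    have h8 := ENNReal.toReal_mono (ENNReal.add_ne_top.mpr ⟨f1, f2⟩) h7
    rwa [ENNReal.toReal_add f1 f2] at h8
  have h1 : d ≤ ϱ⁻¹ * (LF * d + S) := by
    refine step1.trans (mul_le_mul_of_nonneg_left ?_ (inv_nonneg.mpr hϱ.le))
    calc wNorm ϱ (fun t => F u t - G v t)
        ≤ wNorm ϱ (fun t => F u t - F v t) + wNorm ϱ (fun t => F v t - G v t) :=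
          tri (F u) (F v) (G v) hFu hFv hGv hFuFv hFvGv
      _ ≤ LF * d + S := add_le_add (hFlip u v hu hv) (hS v hv)
  have h2 : d ≤ ϱ⁻¹ * (S + LG * d) := by
    refine step1.trans (mul_le_mul_of_nonneg_left ?_ (inv_nonneg.mpr hϱ.le))
    calc wNorm ϱ (fun t => F u t - G v t)
        ≤ wNorm ϱ (fun t => F u t - G u t) + wNorm ϱ (fun t => G u t - G v t) :=
          tri (F u) (G u) (G v) hFu hGu hGv hFuGu hGuGv
      _ ≤ S + LG * d := add_le_add (hS u hu) (hGlip u v hu hv)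
  have hp : 0 < ϱ - (LF + LG) / 2 := by linarith
  rw [inv_mul_eq_div, le_div_iff₀ hp]
  have m1 := mul_le_mul_of_nonneg_left h1 hϱ.le
  have m2 := mul_le_mul_of_nonneg_left h2 hϱ.le
  rw [← mul_assoc, mul_inv_cancel₀ hϱ.ne', one_mul] at m1 m2
  linarith [m1, m2]
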